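/- Let K be a field, β ∈ K∖{0}, and, in the notation of the K[t₀,…,t_n]-module structure on H_n, let v(x,y,z) = Σ_i θ_i(t₀,t₁,…,t_k) ∗ u_{i₁}⋯u_{i_k} ∈ H_k and q(y,z) = ω(t₀,t₁,…,t_d) ∗ y^d ∈ H_d, where θ_i ∈ K[t₀,…,t_k], ω ∈ K[t₀,…,t_d], and each u_{i_j} ∈ {x,y}. Then the substitution u(x,y,z) = q(v(x,y,z)/β, z) ∈ H_{kd} equals ω(t₀,t_d,t_{2d},…,t_{kd})/β^d acting on the product (Σ_i θ_i(t₀,t₁,…,t_k) ∗ u_{i₁}⋯u_{i_k}) (Σ_i θ_i(t_k,t_{k+1},…,t_{2k}) ∗ u_{i₁}⋯u_{i_k}) ⋯ (Σ_i θ_i(t_{k(d−1)},t_{k(d−1)+1},…,t_{kd}) ∗ u_{i₁}⋯u_{i_k}). -/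

import Mathlib

open MonoidAlgebra

noncomputable section

/-- The free associative algebra `K⟨x,y,z⟩`. -/
abbrev FA (K : Type) [Field K] := MonoidAlgebra K (FreeMonoid (Fin 3))

variable (K : Type) [Field K]

/-- The generators `x = Xv 0`, `y = Xv 1`, `z = Xv 2`. -/
def Xv (i : Fin 3) : FA K := MonoidAlgebra.of K (FreeMonoid (Fin 3)) (FreeMonoid.of i)

/-- The substitution (endomorphism) sending the generators `x, y, z` to `f 0, f 1, f 2`. -/
def subst (f : Fin 3 → FA K) : FA K →ₐ[K] FA K :=
  MonoidAlgebra.lift K (FA K) (FreeMonoid (Fin 3)) (FreeMonoid.lift f)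

/-- `insertZ b j w` inserts `b i` extra letters `z` into the `i`-th gap of the word `w`
(gaps numbered from `j`): `z^{a₀}u₁z^{a₁}⋯u_mz^{a_m} ↦ z^{a₀+b₀}u₁z^{a₁+b₁}⋯u_mz^{a_m+b_m}`. -/
def insertZ (b : ℕ → ℕ) : ℕ → List (Fin 3) → List (Fin 3)
  | j, [] => List.replicate (b j) (2 : Fin 3)
  | j, a :: rest =>
    if a = (2 : Fin 3) then a :: insertZ b j rest
    else List.replicate (b j) (2 : Fin 3) ++ a :: insertZ b (j + 1) rest

/-- The `∗`-action of `K[t₀,…,t_m]` on the subspace `H_m ⊆ K⟨x,y,z⟩` of polynomials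
homogeneous of degree `m` in `x,y`:
`t₀^{b₀}⋯t_m^{b_m} ∗ z^{a₀}u₁z^{a₁}⋯u_mz^{a_m} = z^{a₀+b₀}u₁z^{a₁+b₁}⋯u_mz^{a_m+b_m}`,
extended bilinearly. -/
def act {m : ℕ} (θ : MvPolynomial (Fin (m + 1)) K) (f : FA K) : FA K :=
  Finsupp.sum (AddMonoidAlgebra.coeff θ) fun b c =>
    Finsupp.sum f.coeff fun w cw =>
      MonoidAlgebra.single
        (FreeMonoid.ofList
          (insertZ (fun j => if hj : j < m + 1 then b ⟨j, hj⟩ else 0) 0 (FreeMonoid.toList w)))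
        (c * cw)

section Aux

def nzc (w : List (Fin 3)) : ℕ := w.countP (fun a => a ≠ 2)

lemma nzc_nil : nzc [] = 0 := rfl
lemma nzc_cons (a : Fin 3) (w : List (Fin 3)) :
    nzc (a :: w) = nzc w + (if a = 2 then 0 else 1) := by
  simp [nzc, List.countP_cons]
lemma nzc_append (w1 w2 : List (Fin 3)) : nzc (w1 ++ w2) = nzc w1 + nzc w2 := by
  simp [nzc, List.countP_append]
lemma nzc_replicate (n : ℕ) : nzc (List.replicate n (2:Fin 3)) = 0 := by
  simp [nzc, List.countP_eq_zero]

lemma nzc_insertZ (b : ℕ → ℕ) (w : List (Fin 3)) : ∀ j, nzc (insertZ b j w) = nzc w := by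
  induction w with
  | nil => intro j; simp [insertZ, nzc_replicate, nzc_nil]
  | cons a rest ih =>
    intro j
    by_cases h : a = 2 <;>
      simp [insertZ, h, nzc_cons, nzc_append, nzc_replicate, ih]

lemma two_cons_replicate (n : ℕ) (l : List (Fin 3)) :
    (2:Fin 3) :: (List.replicate n (2:Fin 3) ++ l) = List.replicate n (2:Fin 3) ++ (2:Fin 3) :: l := by
  induction n with
  | zero => simp
  | succ n ih => simp [List.replicate_succ, ih]

/-- passing an all-z prefix -/
lemma insertZ_zprefix (b : ℕ → ℕ) (w1 : List (Fin 3)) (h : nzc w1 = 0) :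
    ∀ (j : ℕ) (w2 : List (Fin 3)), insertZ b j (w1 ++ w2) = w1 ++ insertZ b j w2 := by
  induction w1 with
  | nil => intro j w2; simp
  | cons a rest ih =>
    intro j w2
    have ha : a = 2 := by
      by_contra hne
      simp [nzc_cons, hne] at h
    have hr : nzc rest = 0 := by simpa [nzc_cons, ha] using h
    simp [insertZ, ha, ih hr]

/-- key split lemma -/
lemma insertZ_split (b : ℕ → ℕ) :
    ∀ (k : ℕ) (w1 : List (Fin 3)) (j : ℕ), 0 < k → nzc w1 = k →
      (∀ i, 0 < i → i < k → b (j + i) = 0) →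
      ∀ w2, insertZ b j (w1 ++ w2)
        = List.replicate (b j) (2:Fin 3) ++ w1 ++ insertZ b (j + k) w2 := by
  intro k
  induction k using Nat.strong_induction_on with
  | _ k IHk =>
  intro w1
  induction w1 with
  | nil =>
    intro j hk h
    exfalso
    rw [nzc_nil] at h
    omega
  | cons a rest ih =>
    intro j hk h hb w2
    by_cases ha : a = 2
    · subst ha
      have hr : nzc rest = k := by
        have := nzc_cons 2 rest
        simp at this
        omega
      rw [List.cons_append, insertZ]
      simp only [if_pos rfl]
      rw [ih j hk hr hb w2]
      simp [two_cons_replicate]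
    · have hr : nzc rest = k - 1 := by
        have := nzc_cons a rest
        simp [ha] at this
        omega
      rw [List.cons_append, insertZ]
      simp only [ha, if_neg ha]
      rcases Nat.lt_or_ge 1 k with hk2 | hk1
      · have hb1 : b (j + 1) = 0 := hb 1 one_pos hk2
        have hrec := IHk (k-1) (by omega) rest (j+1) (by omega) hr
          (fun i hi hik => by
            rw [show j + 1 + i = j + (i+1) by omega]
            exact hb (i+1) (by omega) (by omega)) w2
        rw [hrec]
        have hjk : j + 1 + (k - 1) = j + k := by omega
        simp [hb1, hjk]
      · have hk1' : k = 1 := by omega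
        subst hk1'
        have hr0 : nzc rest = 0 := by omega
        rw [insertZ_zprefix b rest hr0 (j+1) w2]
        simp

lemma insertZ_nil (b : ℕ → ℕ) (j : ℕ) : insertZ b j [] = List.replicate (b j) (2:Fin 3) := by
  rw [insertZ]

def zp (n : ℕ) : FA K := MonoidAlgebra.single (FreeMonoid.ofList (List.replicate n (2:Fin 3))) 1

def iMap (b : ℕ → ℕ) (j : ℕ) : FA K →ₗ[K] FA K :=
  MonoidAlgebra.mapDomainLinearMap K K (fun w => FreeMonoid.ofList (insertZ b j (FreeMonoid.toList w)))

variable {K}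


lemma iMap_single (b : ℕ → ℕ) (j : ℕ) (w : FreeMonoid (Fin 3)) (c : K) :
    iMap K b j (MonoidAlgebra.single w c)
      = MonoidAlgebra.single (FreeMonoid.ofList (insertZ b j (FreeMonoid.toList w))) c := by
  show MonoidAlgebra.mapDomainLinearMap K K _ _ = _
  rw [MonoidAlgebra.mapDomainLinearMap_single]

lemma act_single (m : ℕ) (b : Fin (m+1) →₀ ℕ) (c : K) (f : FA K) :
    act K (MvPolynomial.monomial b c) f
      = c • iMap K (fun j => if hj : j < m + 1 then b ⟨j, hj⟩ else 0) 0 f := by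
  classical
  rw [act, ← MvPolynomial.single_eq_monomial, AddMonoidAlgebra.coeff_single]
  rw [Finsupp.sum_single_index (by simp)]
  apply MonoidAlgebra.coeff_injective
  rw [MonoidAlgebra.coeff_finsuppSum, MonoidAlgebra.coeff_smul]
  show _ = c • Finsupp.mapDomain _ f.coeff
  rw [Finsupp.mapDomain, Finsupp.smul_sum]
  apply Finsupp.sum_congr
  intro w _
  rw [MonoidAlgebra.coeff_single, Finsupp.smul_single, smul_eq_mul]

example (m : ℕ) (θ η : MvPolynomial (Fin (m+1)) K) (f : FA K) :
    act K (θ + η) f = act K θ f + act K η f := by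
  rw [act, act, act, AddMonoidAlgebra.coeff_add]
  apply Finsupp.sum_add_index (by intro b _; simp) (by intro b _ c1 c2; rw [← Finsupp.sum_add]; apply Finsupp.sum_congr; intro w _; rw [add_mul, MonoidAlgebra.single_add])

lemma act_add (m : ℕ) (θ η : MvPolynomial (Fin (m+1)) K) (f : FA K) :
    act K (θ + η) f = act K θ f + act K η f := by
  rw [act, act, act, AddMonoidAlgebra.coeff_add]
  apply Finsupp.sum_add_index (by intro b _; simp) (by intro b _ c1 c2; rw [← Finsupp.sum_add]; apply Finsupp.sum_congr; intro w _; rw [add_mul, MonoidAlgebra.single_add])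

/-- homogeneous of degree k in x,y -/
def Hk (k : ℕ) (f : FA K) : Prop := ∀ w ∈ f.coeff.support, nzc (FreeMonoid.toList w) = k

lemma zp_mul_single (n : ℕ) (w : FreeMonoid (Fin 3)) (c : K) :
    zp K n * MonoidAlgebra.single w c
      = MonoidAlgebra.single (FreeMonoid.ofList (List.replicate n (2:Fin 3) ++ FreeMonoid.toList w)) c := by
  rw [zp, MonoidAlgebra.single_mul_single, one_mul]
  rfl

lemma single_mul_single' (w w' : FreeMonoid (Fin 3)) (c c' : K) :
    MonoidAlgebra.single w c * MonoidAlgebra.single w' c'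
      = MonoidAlgebra.single (FreeMonoid.ofList (FreeMonoid.toList w ++ FreeMonoid.toList w')) (c * c') := by
  rw [MonoidAlgebra.single_mul_single]
  rfl

lemma zp_mul_zp (n m : ℕ) : zp K n * zp K m = zp K (n + m) := by
  rw [zp, zp, MonoidAlgebra.single_mul_single, one_mul]
  congr 1
  show FreeMonoid.ofList _ * FreeMonoid.ofList _ = _
  rw [← FreeMonoid.ofList_append, List.replicate_append_replicate]

lemma toList_ofList (l : List (Fin 3)) : FreeMonoid.toList (FreeMonoid.ofList l) = l := rfl

-- copy list lemmas from t1 (will merge later); for now assume them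

lemma step_single (b : ℕ → ℕ) (k j : ℕ) (hk : 0 < k)
    (hb : ∀ i, 0 < i → i < k → b (j + i) = 0)
    (w1 : FreeMonoid (Fin 3)) (hw1 : nzc (FreeMonoid.toList w1) = k) (c1 : K) (g : FA K) :
    iMap K b j (MonoidAlgebra.single w1 c1 * g)
      = zp K (b j) * (MonoidAlgebra.single w1 c1 * iMap K b (j + k) g) := by
  induction g using MonoidAlgebra.induction_linear with
  | zero => simp
  | add f g hf hg => rw [mul_add, map_add, hf, hg, map_add, mul_add, mul_add]
  | single w2 c2 =>
    rw [single_mul_single', iMap_single, iMap_single, single_mul_single', zp_mul_single]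
    rw [toList_ofList, toList_ofList]
    congr 2
    rw [insertZ_split b k (FreeMonoid.toList w1) j hk hw1 hb (FreeMonoid.toList w2)]
    simp

lemma Hk_tail {k : ℕ} {w : FreeMonoid (Fin 3)} {c : K} {f : FA K}
    (h : Hk k (MonoidAlgebra.single w c + f)) (hc : c ≠ 0) (hw : w ∉ f.coeff.support) :
    nzc (FreeMonoid.toList w) = k ∧ Hk k f := by
  constructor
  · apply h
    rw [MonoidAlgebra.coeff_add, Finsupp.mem_support_iff, Finsupp.add_apply, MonoidAlgebra.coeff_single, Finsupp.single_eq_same]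
    rw [Finsupp.notMem_support_iff] at hw
    simp [hw, hc]
  · intro u hu
    apply h
    rw [MonoidAlgebra.coeff_add, Finsupp.mem_support_iff, Finsupp.add_apply, MonoidAlgebra.coeff_single]
    have hne : u ≠ w := by rintro rfl; exact hw hu
    rw [Finsupp.single_eq_of_ne hne]
    simpa [Finsupp.mem_support_iff] using hu

lemma step (b : ℕ → ℕ) (k j : ℕ) (hk : 0 < k)
    (hb : ∀ i, 0 < i → i < k → b (j + i) = 0)
    (f : FA K) (hf : Hk k f) (g : FA K) :
    iMap K b j (f * g) = zp K (b j) * (f * iMap K b (j + k) g) := by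
  induction f using MonoidAlgebra.induction with
  | zero => simp
  | single_add w c f hw hc ih =>
    obtain ⟨h1, h2⟩ := Hk_tail hf hc hw
    rw [add_mul, map_add, step_single b k j hk hb w h1 c g, ih h2, add_mul, mul_add]

variable (K) in
def gprod (v : FA K) : (ℕ → ℕ) → ℕ → FA K
  | c, 0 => zp K (c 0)
  | c, d+1 => zp K (c 0) * (v * gprod v (fun i => c (i+1)) d)


lemma gprod_congr (v : FA K) (c c' : ℕ → ℕ) : ∀ d, (∀ i, i ≤ d → c i = c' i) →
    gprod K v c d = gprod K v c' d := by
  intro d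
  induction d generalizing c c' with
  | zero => intro h; simp [gprod, h 0 (le_refl 0)]
  | succ d ih =>
    intro h
    rw [gprod, gprod, h 0 (by omega), ih _ _ (fun i hi => h (i+1) (by omega))]

/-- main computation, k > 0 -/
lemma iMap_pow (b : ℕ → ℕ) (k : ℕ) (hk : 0 < k) (v : FA K) (hv : Hk k v) :
    ∀ (d j : ℕ), (∀ m, m < d → ∀ i, 0 < i → i < k → b (j + (m*k + i)) = 0) →
    iMap K b j (v ^ d) = gprod K v (fun i => b (j + i * k)) d := by
  intro d
  induction d with
  | zero =>
    intro j _
    rw [pow_zero]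
    show iMap K b j (MonoidAlgebra.single 1 1) = _
    rw [iMap_single, gprod]
    show MonoidAlgebra.single (FreeMonoid.ofList (insertZ b j [])) (1:K) = _
    rw [insertZ]
    simp [zp]
  | succ d ih =>
    intro j hb
    rw [pow_succ', step b k j hk (fun i h1 h2 => by
        have := hb 0 (by omega) i h1 h2
        simpa using this) v hv (v ^ d)]
    rw [ih (j+k) (fun m hm i h1 h2 => by
        rw [show j + k + (m*k+i) = j + ((m+1)*k + i) by ring]
        exact hb (m+1) (by omega) i h1 h2)]
    rw [gprod]
    have h0 : j + 0 * k = j := by ring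
    rw [h0, gprod_congr v (fun i => b (j + k + i * k)) (fun i => b (j + (i+1) * k)) d (fun i _ => by ring_nf)]

-- LHS: substitution computation
lemma subst_single (f : Fin 3 → FA K) (w : FreeMonoid (Fin 3)) (c : K) :
    subst K f (MonoidAlgebra.single w c) = c • (List.map f (FreeMonoid.toList w)).prod := by
  rw [subst, MonoidAlgebra.lift_single]
  congr 1
  exact FreeMonoid.lift_apply f w

lemma prod_map_replicate (f : Fin 3 → FA K) (hf : f 2 = Xv K 2) (n : ℕ) :
    (List.map f (List.replicate n (2:Fin 3))).prod = zp K n := by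
  induction n with
  | zero => simp [zp]; rfl
  | succ n ih =>
    rw [List.replicate_succ, List.map_cons, List.prod_cons, ih, hf]
    show MonoidAlgebra.single (FreeMonoid.of 2) 1 * _ = _
    rw [zp, zp, MonoidAlgebra.single_mul_single, one_mul]
    congr 1

lemma lhs_prod (β : K) (v : FA K) (f : Fin 3 → FA K) (hf2 : f 2 = Xv K 2)
    (hf1 : f 1 = β⁻¹ • v) (b : ℕ → ℕ) :
    ∀ (d j : ℕ), (List.map f (insertZ b j (List.replicate d (1:Fin 3)))).prod
      = ((β ^ d)⁻¹ : K) • gprod K v (fun i => b (j + i)) d := by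
  intro d
  induction d with
  | zero =>
    intro j
    show (List.map f (insertZ b j [])).prod = _
    rw [insertZ]
    show _ = ((β ^ 0)⁻¹ : K) • zp K (b (j + 0))
    rw [prod_map_replicate f hf2]
    simp
  | succ d ih =>
    intro j
    rw [List.replicate_succ]
    rw [show insertZ b j ((1:Fin 3) :: List.replicate d 1)
        = List.replicate (b j) (2:Fin 3) ++ (1:Fin 3) :: insertZ b (j+1) (List.replicate d 1) by
      show insertZ b j ((1:Fin 3) :: List.replicate d 1) = _
      rw [insertZ, if_neg (by decide : ¬ (1:Fin 3) = (2:Fin 3))]]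
    rw [List.map_append, List.prod_append, List.map_cons, List.prod_cons,
      prod_map_replicate f hf2, hf1, ih (j+1)]
    rw [gprod]
    rw [show (j+0) = j from rfl,
      gprod_congr v (fun i => b (j + 1 + i)) (fun i => b (j + (i+1))) d (fun i _ => by ring_nf)] at *
    simp only [smul_mul_assoc, mul_smul_comm, smul_smul]
    congr 1
    rw [pow_succ, mul_inv]
    try ring


lemma toList_mul (w1 w2 : FreeMonoid (Fin 3)) :
    FreeMonoid.toList (w1 * w2) = FreeMonoid.toList w1 ++ FreeMonoid.toList w2 := rfl

lemma Hk_mul {k1 k2 : ℕ} {f g : FA K} (hf : Hk k1 f) (hg : Hk k2 g) : Hk (k1 + k2) (f * g) := by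
  classical
  intro w hw
  have := MonoidAlgebra.support_coeff_mul_subset f g hw
  rw [Finset.mem_mul] at this
  obtain ⟨a1, ha1, a2, ha2, hw'⟩ := this
  rw [← hw', toList_mul, nzc_append, hf a1 ha1, hg a2 ha2]

lemma Hk_pow {k : ℕ} {f : FA K} (hf : Hk k f) (d : ℕ) : Hk (k * d) (f ^ d) := by
  induction d with
  | zero =>
    intro w hw
    rw [pow_zero] at hw
    have : w ∈ (MonoidAlgebra.single (1 : FreeMonoid (Fin 3)) (1:K)).coeff.support := hw
    rw [MonoidAlgebra.coeff_single, Finsupp.support_single_ne_zero _ one_ne_zero] at this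
    simp at this
    subst this
    simp [nzc]
  | succ d ih =>
    rw [pow_succ']
    have := Hk_mul hf ih
    rwa [show k + k * d = k * (d+1) by ring] at this

/-- all-z elements: iMap is left mult by zp -/
lemma H0_replicate {l : List (Fin 3)} (h : nzc l = 0) :
    l = List.replicate l.length (2:Fin 3) := by
  rw [List.eq_replicate_iff]
  refine ⟨rfl, fun a ha => ?_⟩
  by_contra hne
  have : 0 < nzc l := by
    rw [nzc]
    exact List.countP_pos_iff.mpr ⟨a, ha, by simpa using hne⟩
  omega

lemma iMap_H0 (b : ℕ → ℕ) (j : ℕ) (f : FA K) (hf : Hk 0 f) :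
    iMap K b j f = zp K (b j) * f := by
  induction f using MonoidAlgebra.induction with
  | zero => simp
  | single_add w c f hw hc ih =>
    obtain ⟨h1, h2⟩ := Hk_tail hf hc hw
    rw [map_add, mul_add, iMap_single, ih h2, zp_mul_single]
    congr 2
    have hrep := H0_replicate h1
    have := insertZ_zprefix b (FreeMonoid.toList w) h1 j []
    rw [List.append_nil] at this
    rw [this, insertZ_nil, hrep]
    rw [List.replicate_append_replicate, List.replicate_append_replicate, Nat.add_comm]

lemma zp_comm_H0 (n : ℕ) (f : FA K) (hf : Hk 0 f) : f * zp K n = zp K n * f := by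
  induction f using MonoidAlgebra.induction with
  | zero => simp
  | single_add w c f hw hc ih =>
    obtain ⟨h1, h2⟩ := Hk_tail hf hc hw
    rw [add_mul, mul_add, ih h2, zp, single_mul_single', single_mul_single', mul_one, one_mul]
    congr 2
    rw [toList_ofList, H0_replicate h1, List.replicate_append_replicate,
      List.replicate_append_replicate, Nat.add_comm]

lemma gprod_H0 (v : FA K) (hv : Hk 0 v) (c : ℕ → ℕ) :
    ∀ d, gprod K v c d = zp K (∑ i ∈ Finset.range (d+1), c i) * v ^ d := by
  intro d
  induction d generalizing c with
  | zero => simp [gprod]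
  | succ d ih =>
    rw [gprod, ih (fun i => c (i+1)), pow_succ',
      show v * (zp K (∑ i ∈ Finset.range (d+1), c (i+1)) * v ^ d)
          = zp K (∑ i ∈ Finset.range (d+1), c (i+1)) * (v * v ^ d) by
        rw [← mul_assoc, zp_comm_H0 _ v hv, mul_assoc],
      ← mul_assoc, zp_mul_zp, Finset.sum_range_succ' (fun i => c i) (d+1), Nat.add_comm]

lemma Hk_single {k : ℕ} {x : FreeMonoid (Fin 3)} (hx : nzc (FreeMonoid.toList x) = k) (c : K) :
    Hk k (MonoidAlgebra.single x c) := by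
  intro w hw
  have := Finsupp.support_single_subset hw
  simp only [Finset.mem_singleton] at this
  subst this
  exact hx

lemma Hk_sum {k : ℕ} {ι : Type*} (s : Finset ι) (F : ι → FA K)
    (h : ∀ i ∈ s, Hk k (F i)) : Hk k (∑ i ∈ s, F i) := by
  intro w hw
  rw [Finsupp.mem_support_iff] at hw
  have hap : (∑ i ∈ s, F i).coeff w = ∑ i ∈ s, (F i).coeff w := by
    rw [MonoidAlgebra.coeff_sum, Finset.sum_apply']
  rw [hap] at hw
  by_contra hne
  apply hw
  apply Finset.sum_eq_zero
  intro i hi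
  by_contra hne2
  exact hne (h i hi w (Finsupp.mem_support_iff.mpr hne2))

lemma Hk_act {k m : ℕ} (θ : MvPolynomial (Fin (m+1)) K) {f : FA K} (hf : Hk k f) :
    Hk k (act K θ f) := by
  rw [act]
  apply Hk_sum
  intro b _
  apply Hk_sum
  intro w hw
  apply Hk_single
  rw [toList_ofList, nzc_insertZ]
  exact hf w hw

lemma Hk_base (k : ℕ) (u : Fin k → Fin 2) :
    nzc (FreeMonoid.toList (FreeMonoid.ofList (List.ofFn fun t => Fin.castSucc (u t)))) = k := by
  rw [toList_ofList, nzc]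
  rw [List.countP_eq_length.mpr]
  · simp
  · intro a ha
    rw [List.mem_ofFn] at ha
    obtain ⟨t, rfl⟩ := ha
    have := (u t).isLt
    simp only [decide_eq_true_eq]
    intro hc
    have : (Fin.castSucc (u t)).val = (2 : Fin 3).val := by rw [hc]
    simp [Fin.castSucc] at this
    omega

end Aux

/-- Formanek's trick (Lemma 2.2): let `β ∈ K∖{0}`,
`v = Σ_i θ_i(t₀,…,t_k) ∗ u_{i₁}⋯u_{i_k} ∈ H_k` and `q = ω(t₀,…,t_d) ∗ y^d ∈ H_d`.  Then
`u = q(v/β, z)` equals `ω(t₀,t_k,t_{2k},…,t_{kd})/β^d` acting on the product of the `d`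
copies `Σ_i θ_i(t_{jk},…,t_{(j+1)k}) ∗ u_{i₁}⋯u_{i_k}` (`j = 0,…,d−1`) of `v`. -/
theorem formanek_substitution (β : K) (hβ : β ≠ 0) (k d : ℕ)
    (ι : Type) [Fintype ι] (θ : ι → MvPolynomial (Fin (k + 1)) K)
    (U : ι → Fin k → Fin 2) (ω : MvPolynomial (Fin (d + 1)) K)
    (v q : FA K)
    (hv : v = ∑ i, act K (θ i)
      (MonoidAlgebra.single (FreeMonoid.ofList (List.ofFn fun t => Fin.castSucc (U i t))) 1))
    (hq : q = act K ω
      (MonoidAlgebra.single (FreeMonoid.ofList (List.replicate d (1 : Fin 3))) 1)) :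
    subst K ![Xv K 0, β⁻¹ • v, Xv K 2] q =
      (β ^ d)⁻¹ • act K
        (MvPolynomial.rename
          (fun j : Fin (d + 1) =>
            (⟨(j : ℕ) * k, Nat.lt_succ_of_le (by
              calc (j : ℕ) * k ≤ d * k := Nat.mul_le_mul_right k (Fin.is_le j)
                _ = k * d := Nat.mul_comm d k)⟩ : Fin (k * d + 1))) ω)
        (v ^ d) := by
  classical
  have hvk : Hk k v := by
    rw [hv]
    apply Hk_sum
    intro i _
    exact Hk_act _ (Hk_single (Hk_base k (U i)) 1)
  subst hq
  set g : Fin (d+1) → Fin (k*d+1) := fun j =>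
    (⟨(j : ℕ) * k, Nat.lt_succ_of_le (by
       calc (j : ℕ) * k ≤ d * k := Nat.mul_le_mul_right k (Fin.is_le j)
         _ = k * d := Nat.mul_comm d k)⟩ : Fin (k * d + 1)) with hg
  induction ω using MvPolynomial.induction_on' with
  | add p p' hp hp' =>
    rw [act_add, map_add, hp, hp', map_add (MvPolynomial.rename g), act_add, smul_add]
  | monomial b c =>
    rw [act_single, MvPolynomial.rename_monomial, act_single, map_smul, iMap_single,
      subst_single, toList_ofList]
    set B1 : ℕ → ℕ := fun j => if hj : j < d + 1 then b ⟨j, hj⟩ else 0 with hB1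
    set B2 : ℕ → ℕ := fun j => if hj : j < k * d + 1 then (Finsupp.mapDomain g b) ⟨j, hj⟩ else 0 with hB2
    simp only [toList_ofList]
    rw [lhs_prod β v _ (by simp) (by simp) B1 d 0, one_smul]
    rw [smul_comm c ((β ^ d)⁻¹)]
    congr 1
    rcases Nat.eq_zero_or_pos k with hk0 | hk
    · -- k = 0 case
      subst hk0
      have hv0 : Hk 0 v := hvk
      have hp0 : Hk 0 (v ^ d) := by
        have := Hk_pow hv0 d
        rwa [Nat.zero_mul] at this
      rw [iMap_H0 B2 0 (v ^ d) hp0, gprod_H0 v hv0 _ d]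
      have h0 : (0:ℕ) < 0 * d + 1 := by omega
      have hB20 : B2 0 = Finsupp.mapDomain g b ⟨0, h0⟩ := by rw [hB2]; exact dif_pos h0
      have hmd : Finsupp.mapDomain g b ⟨0, h0⟩ = b.sum fun _ m => m := by
        rw [Finsupp.mapDomain, Finsupp.sum_apply]
        apply Finsupp.sum_congr
        intro a _
        rw [show g a = ⟨0, h0⟩ from Fin.ext (by simp [hg]), Finsupp.single_eq_same]
      have hsum : b.sum (fun _ m => m) = ∑ i : Fin (d+1), b i :=
        Finsupp.sum_fintype _ _ (fun _ => rfl)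
      have hS : ∑ i ∈ Finset.range (d+1), B1 (0 + i) = B2 0 := by
        rw [hB20, hmd, hsum, ← Fin.sum_univ_eq_sum_range (fun i => B1 (0 + i)) (d+1)]
        apply Finset.sum_congr rfl
        intro i _
        rw [hB1]
        simp only [Nat.zero_add]
        rw [dif_pos i.isLt, Fin.eta]
      rw [hS]
    · -- k > 0 case
      have hginj : Function.Injective g := by
        intro a b hab
        rw [hg] at hab
        simp only [Fin.mk.injEq] at hab
        have := Nat.eq_of_mul_eq_mul_right hk hab
        exact Fin.ext this
      rw [iMap_pow B2 k hk v hvk d 0 (fun m hm i h1 h2 => by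
        have hmk : (m+1) * k ≤ d * k := Nat.mul_le_mul_right k (by omega)
        have hlt : m * k + i < k * d + 1 := by
          have h1' : m * k + i < (m+1) * k := by rw [Nat.succ_mul]; omega
          have h2' : d * k = k * d := Nat.mul_comm d k
          omega
        rw [hB2]
        simp only [Nat.zero_add]
        rw [dif_pos hlt]
        apply Finsupp.mapDomain_notin_range
        rintro ⟨j, hj⟩
        rw [hg] at hj
        have hj' : (j : ℕ) * k = m * k + i := by
          have := congrArg Fin.val hj
          simpa using this
        rcases le_or_gt (j : ℕ) m with hle | hlt2
        · have : (j:ℕ) * k ≤ m * k := Nat.mul_le_mul_right k hle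
          omega
        · have : (m+1) * k ≤ (j:ℕ) * k := Nat.mul_le_mul_right k hlt2
          rw [Nat.succ_mul] at this
          omega)]
      congr 1
      apply gprod_congr
      intro i hi
      simp only [Nat.zero_add]
      rw [hB1, hB2]
      simp only
      have hi1 : i < d + 1 := by omega
      have hik : i * k < k * d + 1 := by
        have h1' : i * k ≤ d * k := Nat.mul_le_mul_right k (by omega)
        have h2' : d * k = k * d := Nat.mul_comm d k
        omega
      rw [dif_pos hi1, dif_pos hik]
      have : (⟨i * k, hik⟩ : Fin (k*d+1)) = g ⟨i, hi1⟩ := by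
        rw [hg]
      rw [this, Finsupp.mapDomain_apply hginj]
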